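/- Let G be a cyclic group of order p² with generator σ₁, let σ₂ = σ₁^p, and work in the group algebra F[G] over a field F of characteristic p. For any μ ∈ F define Ψ₁ = σ₁·∑_{i=0}^{p−1} (μ choose i)(σ₂−1)^i − 1 and Ψ₂ = σ₂ − 1. Then Ψ₂^p = 0 and Ψ₁^p = Ψ₂ + δ for some δ in the ideal generated by (σ₂−1)² — in particular, when μ = 0, Ψ₁ = σ₁ − 1 satisfies (σ₁−1)^p = σ₂ − 1 exactly. -/

import Mathlib

/-- The binomial coefficient `(μ choose i) = μ(μ-1)⋯(μ-i+1)/i!` evaluated in a field `F`. -/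
noncomputable def fchoose {F : Type*} [Field F] (μ : F) (i : ℕ) : F :=
  (∏ k ∈ Finset.range i, (μ - (k : F))) / (i.factorial : F)

/-- In the group algebra `F[G]` of the cyclic group `G = ⟨σ₁⟩` of order `p²` over a field
`F` of characteristic `p`, with `σ₂ = σ₁^p`, `Ψ₂ = σ₂ - 1`, and
`Ψ₁ = σ₁·σ₂^{[μ]} - 1 = σ₁·∑_{i=0}^{p-1}(μ choose i)(σ₂-1)^i - 1`:
`Ψ₂^p = 0`, `Ψ₁^p = Ψ₂ + δ` for some `δ` in the ideal generated by `(σ₂-1)²`, and when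
`μ = 0` one has `(σ₁-1)^p = σ₂ - 1` exactly. -/
theorem stmt8 (p : ℕ) (hp : p.Prime) (F : Type*) [Field F] [CharP F p] (μ : F)
    (s1 : MonoidAlgebra F (Multiplicative (ZMod (p ^ 2))))
    (hs1 : s1 = MonoidAlgebra.of F (Multiplicative (ZMod (p ^ 2)))
      (Multiplicative.ofAdd (1 : ZMod (p ^ 2))))
    (s2 Ψ₂ Ψ₁ : MonoidAlgebra F (Multiplicative (ZMod (p ^ 2))))
    (hs2 : s2 = s1 ^ p) (hΨ₂ : Ψ₂ = s2 - 1)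
    (hΨ₁ : Ψ₁ = s1 * (∑ i ∈ Finset.range p, fchoose μ i • (s2 - 1) ^ i) - 1) :
    Ψ₂ ^ p = 0 ∧
      (∃ δ ∈ Ideal.span {(s2 - 1) ^ 2}, Ψ₁ ^ p = Ψ₂ + δ) ∧
      (s1 - 1) ^ p = s2 - 1 := by
  haveI := Fact.mk hp
  haveI : CharP (MonoidAlgebra F (Multiplicative (ZMod (p ^ 2)))) p :=
    charP_of_injective_algebraMap' F p
  have h1 : s1 ^ (p ^ 2) = 1 := by
    rw [hs1, ← map_pow]
    have : (Multiplicative.ofAdd (1 : ZMod (p ^ 2))) ^ (p ^ 2)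
        = Multiplicative.ofAdd ((p ^ 2 : ℕ) • (1 : ZMod (p ^ 2))) := by
      rw [ofAdd_nsmul]
    rw [this]
    simp [nsmul_eq_mul, ZMod.natCast_self, MonoidAlgebra.one_def]
  have h2 : s2 ^ p = 1 := by
    rw [hs2, ← pow_mul, ← sq, h1]
  have hΨ2p : (s2 - 1) ^ p = 0 := by
    rw [sub_pow_char, h2, one_pow, sub_self]
  have h3 : (s1 - 1) ^ p = s2 - 1 := by
    rw [sub_pow_char, one_pow, hs2]
  refine ⟨by rw [hΨ₂]; exact hΨ2p, ⟨0, Ideal.zero_mem _, ?_⟩, h3⟩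
  rw [add_zero, hΨ₁, hΨ₂, sub_pow_char, mul_pow, one_pow, sum_pow_char, ← hs2]
  have hsum : ∑ i ∈ Finset.range p, (fchoose μ i • (s2 - 1) ^ i) ^ p = 1 := by
    rw [Finset.sum_eq_single 0]
    · simp [fchoose]
    · intro i hi hi0
      rw [smul_pow, ← pow_mul, mul_comm i p, pow_mul, hΨ2p, zero_pow hi0, smul_zero]
    · intro h; exact absurd (Finset.mem_range.mpr hp.pos) h
  rw [hsum, mul_one]
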